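/- arXiv:1709.03333 — 5 statements merged into one kernel-verified Lean document; each statement's English description precedes it below -/
import Mathlib

section
/- Let C be a norm-closed convex bounded subset of L¹[0,1] and let (x_n) be a sequence in C that converges in measure to some x ∈ L¹[0,1]. Then the distance from x to C satisfies dist(x, C) ≤ diam(C)/2, where diam(C) = sup{‖u − v‖₁ : u, v ∈ C}. Consequently the Hausdorff distance between C and its closure in the topology of convergence in measure is at most diam(C)/2. -/
open MeasureTheory Filter Metric Topology

/-- Lebesgue measure on `[0,1]`. -/
noncomputable def μ01 : Measure ℝ := volume.restrict (Set.Icc 0 1)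

instance : IsFiniteMeasure μ01 := by
  unfold μ01
  exact ⟨by simp [Real.volume_Icc]⟩

lemma aux_key (C : Set (Lp ℝ 1 μ01)) (hbdd : Bornology.IsBounded C)
    (z : ℕ → Lp ℝ 1 μ01) (hzC : ∀ n, z n ∈ C) (y : Lp ℝ 1 μ01)
    (hlim : TendstoInMeasure μ01 (fun n => (z n : ℝ → ℝ)) atTop (y : ℝ → ℝ)) :
    Metric.infDist y C ≤ Metric.diam C / 2 := by
  obtain ⟨σ, hσ, hae⟩ := hlim.exists_seq_tendsto_ae
  set d := Metric.infDist y C with hd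
  -- norms as integrals
  have hnorm : ∀ f : Lp ℝ 1 μ01, ‖f‖ = ∫ t, |f t| ∂μ01 := by
    intro f
    simpa [Real.norm_eq_abs] using MeasureTheory.L1.norm_eq_integral_norm f
  have hint : ∀ f : Lp ℝ 1 μ01, Integrable (f : ℝ → ℝ) μ01 := fun f =>
    MeasureTheory.L1.integrable_coeFn f
  -- the key limit
  have hdiff : ∀ n, ‖z (σ n) - z 0‖ - ‖z (σ n) - y‖
      = ∫ t, (|z (σ n) t - z 0 t| - |z (σ n) t - y t|) ∂μ01 := by
    intro n
    have h1 : ‖z (σ n) - z 0‖ = ∫ t, |z (σ n) t - z 0 t| ∂μ01 := by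
      rw [hnorm]
      refine integral_congr_ae ?_
      filter_upwards [Lp.coeFn_sub (z (σ n)) (z 0)] with t ht
      rw [ht, Pi.sub_apply]
    have h2 : ‖z (σ n) - y‖ = ∫ t, |z (σ n) t - y t| ∂μ01 := by
      rw [hnorm]
      refine integral_congr_ae ?_
      filter_upwards [Lp.coeFn_sub (z (σ n)) y] with t ht
      rw [ht, Pi.sub_apply]
    rw [h1, h2, ← integral_sub]
    · exact ((hint (z (σ n))).sub (hint (z 0))).abs
    · exact ((hint (z (σ n))).sub (hint y)).abs
  have hlim2 : Filter.Tendsto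
      (fun n => ∫ t, (|z (σ n) t - z 0 t| - |z (σ n) t - y t|) ∂μ01) atTop
      (𝓝 (∫ t, |y t - z 0 t| ∂μ01)) := by
    refine tendsto_integral_of_dominated_convergence (fun t => |y t - z 0 t|)
      (fun n => ?_) (((hint y).sub (hint (z 0))).abs) (fun n => ?_) ?_
    · exact (((hint (z (σ n))).sub (hint (z 0))).abs.sub
        ((hint (z (σ n))).sub (hint y)).abs).aestronglyMeasurable
    · refine Filter.Eventually.of_forall fun t => ?_
      have := abs_abs_sub_abs_le_abs_sub (z (σ n) t - z 0 t) (z (σ n) t - y t)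
      rw [Real.norm_eq_abs]
      calc |(|z (σ n) t - z 0 t| - |z (σ n) t - y t|)|
          ≤ |(z (σ n) t - z 0 t) - (z (σ n) t - y t)| := this
        _ = |y t - z 0 t| := by ring_nf
    · filter_upwards [hae] with t ht
      have h1 : Filter.Tendsto (fun n => |z (σ n) t - z 0 t|) atTop (𝓝 |y t - z 0 t|) :=
        (ht.sub tendsto_const_nhds).abs
      have h2 : Filter.Tendsto (fun n => |z (σ n) t - y t|) atTop (𝓝 |y t - y t|) :=
        (ht.sub tendsto_const_nhds).abs
      have := h1.sub h2
      simpa using this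
  have hnorm0 : ‖y - z 0‖ = ∫ t, |y t - z 0 t| ∂μ01 := by
    rw [hnorm]
    refine integral_congr_ae ?_
    filter_upwards [Lp.coeFn_sub y (z 0)] with t ht
    rw [ht, Pi.sub_apply]
  have hlim3 : Filter.Tendsto (fun n => ‖z (σ n) - z 0‖ - ‖z (σ n) - y‖) atTop
      (𝓝 ‖y - z 0‖) := by
    rw [hnorm0]
    simpa only [← hdiff] using hlim2
  -- bounds
  have hbound : ∀ n, ‖z (σ n) - z 0‖ - ‖z (σ n) - y‖ ≤ Metric.diam C - d := by
    intro n
    have h1 : ‖z (σ n) - z 0‖ ≤ Metric.diam C := by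
      rw [← dist_eq_norm]
      exact dist_le_diam_of_mem hbdd (hzC (σ n)) (hzC 0)
    have h2 : d ≤ ‖z (σ n) - y‖ := by
      rw [hd]
      have := Metric.infDist_le_dist_of_mem (x := y) (hzC (σ n))
      rwa [dist_comm, dist_eq_norm] at this
    linarith
  have hfinal : ‖y - z 0‖ ≤ Metric.diam C - d :=
    le_of_tendsto hlim3 (Filter.Eventually.of_forall hbound)
  have hd0 : d ≤ ‖y - z 0‖ := by
    have := Metric.infDist_le_dist_of_mem (x := y) (hzC 0)
    rwa [dist_eq_norm] at this
  linarith

/-- If `C` is a norm-closed convex bounded subset of `L¹[0,1]` and `(x n) ⊆ C` converges in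
measure to `x₀`, then `dist(x₀, C) ≤ diam C / 2`; consequently the Hausdorff distance between
`C` and its closure in the topology of convergence in measure is at most `diam C / 2`. -/
theorem dist_le_half_diam_of_tendstoInMeasure
    (C : Set (Lp ℝ 1 μ01)) (hclosed : IsClosed C) (hconv : Convex ℝ C)
    (hbdd : Bornology.IsBounded C)
    (x : ℕ → Lp ℝ 1 μ01) (hxC : ∀ n, x n ∈ C) (x₀ : Lp ℝ 1 μ01)
    (hlim : TendstoInMeasure μ01 (fun n => (x n : ℝ → ℝ)) atTop (x₀ : ℝ → ℝ)) :
    Metric.infDist x₀ C ≤ Metric.diam C / 2 ∧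
      Metric.hausdorffDist C
        {y : Lp ℝ 1 μ01 | ∃ z : ℕ → Lp ℝ 1 μ01, (∀ n, z n ∈ C) ∧
          TendstoInMeasure μ01 (fun n => (z n : ℝ → ℝ)) atTop (y : ℝ → ℝ)} ≤
      Metric.diam C / 2 := by
  constructor
  · exact aux_key C hbdd x hxC x₀ hlim
  · refine Metric.hausdorffDist_le_of_infDist (by positivity) ?_ ?_
    · intro c hc
      have hmem : c ∈ {y : Lp ℝ 1 μ01 | ∃ z : ℕ → Lp ℝ 1 μ01, (∀ n, z n ∈ C) ∧
          TendstoInMeasure μ01 (fun n => (z n : ℝ → ℝ)) atTop (y : ℝ → ℝ)} := by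
        refine ⟨fun _ => c, fun _ => hc, ?_⟩
        intro ε hε
        have hset : {t : ℝ | ε ≤ edist ((c : ℝ → ℝ) t) ((c : ℝ → ℝ) t)} = ∅ := by
          ext t; simp [edist_self, hε.not_ge]
        have heq : (fun _ : ℕ => μ01 {t | ε ≤ edist ((c : ℝ → ℝ) t) ((c : ℝ → ℝ) t)})
            = fun _ => 0 := by
          funext n; rw [hset]; simp
        rw [heq]; exact tendsto_const_nhds
      rw [Metric.infDist_zero_of_mem hmem]
      positivity
    · rintro y ⟨z, hzC, hzlim⟩
      exact aux_key C hbdd z hzC y hzlim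
end

section
/- Let C be a norm-closed convex bounded subset of L¹[0,1] with diam(C) > 0, and suppose the Hausdorff distance between C and its closure in the topology of convergence in measure equals diam(C)/2 (equivalently, for every ε > 0 there is a point x that is the limit in measure of a sequence in C with dist(x, C) ≥ diam(C)/2 − ε). Then for every ε > 0 there exist a sequence (x_n) in C converging in measure to some x ∈ L¹[0,1] such that limsup_n ‖x_n − x‖₁ ≥ diam(C)/2 − ε and, for every c ∈ C, limsup_n ‖x_n − c‖₁ ≥ 2·limsup_n ‖x_n − x‖₁ − ε. In particular t(C) = 2, where t(C) is the infimum of all λ ≥ 0 such that for every sequence (x_n) ⊆ C converging in measure to some x ∈ L¹[0,1], inf_{c∈C} limsup_n ‖c − x_n‖₁ ≤ λ·limsup_n ‖x − x_n‖₁. -/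
open MeasureTheory Filter Metric Topology

/-- The coefficient `t(C)`: the infimum of all `λ ≥ 0` such that for every sequence in `C`
converging in measure to some `x`, `inf_{c ∈ C} limsup_n ‖c - x_n‖ ≤ λ · limsup_n ‖x - x_n‖`. -/
noncomputable def tCoef (C : Set (Lp ℝ 1 μ01)) : ℝ :=
  sInf {l : ℝ | 0 ≤ l ∧ ∀ (x : ℕ → Lp ℝ 1 μ01) (x₀ : Lp ℝ 1 μ01),
    (∀ n, x n ∈ C) →
    TendstoInMeasure μ01 (fun n => (x n : ℝ → ℝ)) atTop (x₀ : ℝ → ℝ) →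
    sInf ((fun c => limsup (fun n => ‖c - x n‖) atTop) '' C) ≤
      l * limsup (fun n => ‖x₀ - x n‖) atTop}

private lemma norm_sub_eq_integral (f g : Lp ℝ 1 μ01) :
    ‖f - g‖ = ∫ t, ‖(f : ℝ → ℝ) t - (g : ℝ → ℝ) t‖ ∂μ01 := by
  rw [L1.norm_eq_integral_norm]
  refine integral_congr_ae ?_
  filter_upwards [Lp.coeFn_sub f g] with t ht
  rw [ht]; rfl

private lemma integrable_norm_sub (f g : Lp ℝ 1 μ01) :
    Integrable (fun t => ‖(f : ℝ → ℝ) t - (g : ℝ → ℝ) t‖) μ01 := by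
  refine ((L1.integrable_coeFn (f - g)).norm).congr ?_
  filter_upwards [Lp.coeFn_sub f g] with t ht
  rw [ht]; rfl

/-- A Brezis–Lieb type lemma in `L¹`: if `x n → x₀` almost everywhere then
`‖x n - c‖ - ‖x n - x₀‖ → ‖x₀ - c‖`. -/
private lemma brezisLieb (x : ℕ → Lp ℝ 1 μ01) (x₀ c : Lp ℝ 1 μ01)
    (hae : ∀ᵐ t ∂μ01, Tendsto (fun n => (x n : ℝ → ℝ) t) atTop (𝓝 ((x₀ : ℝ → ℝ) t))) :
    Tendsto (fun n => ‖x n - c‖ - ‖x n - x₀‖) atTop (𝓝 ‖x₀ - c‖) := by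
  have heq : ∀ n, ‖x n - c‖ - ‖x n - x₀‖ =
      ∫ t, (‖(x n : ℝ → ℝ) t - (c : ℝ → ℝ) t‖ - ‖(x n : ℝ → ℝ) t - (x₀ : ℝ → ℝ) t‖) ∂μ01 := by
    intro n
    rw [norm_sub_eq_integral, norm_sub_eq_integral,
      integral_sub (integrable_norm_sub _ _) (integrable_norm_sub _ _)]
  rw [norm_sub_eq_integral x₀ c]
  simp only [heq]
  refine tendsto_integral_of_dominated_convergence
    (fun t => ‖(x₀ : ℝ → ℝ) t - (c : ℝ → ℝ) t‖) ?_ ?_ ?_ ?_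
  · intro n
    exact (((Lp.aestronglyMeasurable (x n)).sub (Lp.aestronglyMeasurable c)).norm.sub
      (((Lp.aestronglyMeasurable (x n)).sub (Lp.aestronglyMeasurable x₀)).norm))
  · exact integrable_norm_sub x₀ c
  · intro n
    refine Eventually.of_forall fun t => ?_
    have h := abs_norm_sub_norm_le ((x n : ℝ → ℝ) t - (c : ℝ → ℝ) t)
      ((x n : ℝ → ℝ) t - (x₀ : ℝ → ℝ) t)
    have h2 : (x n : ℝ → ℝ) t - (c : ℝ → ℝ) t - ((x n : ℝ → ℝ) t - (x₀ : ℝ → ℝ) t)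
        = (x₀ : ℝ → ℝ) t - (c : ℝ → ℝ) t := by ring
    rw [h2] at h
    simpa using h
  · filter_upwards [hae] with t ht
    have h1 : Tendsto (fun n => ‖(x n : ℝ → ℝ) t - (c : ℝ → ℝ) t‖) atTop
        (𝓝 ‖(x₀ : ℝ → ℝ) t - (c : ℝ → ℝ) t‖) :=
      ((ht.sub tendsto_const_nhds).norm)
    have h2 : Tendsto (fun n => ‖(x n : ℝ → ℝ) t - (x₀ : ℝ → ℝ) t‖) atTop (𝓝 0) := by
      have := (ht.sub (tendsto_const_nhds (x := (x₀ : ℝ → ℝ) t))).norm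
      simpa using this
    simpa using h1.sub h2

/-- The key extraction lemma. -/
private lemma key_extraction (C : Set (Lp ℝ 1 μ01)) (hbdd : Bornology.IsBounded C)
    (hext : ∀ ε > (0 : ℝ), ∃ x₀ : Lp ℝ 1 μ01, ∃ z : ℕ → Lp ℝ 1 μ01,
      (∀ n, z n ∈ C) ∧
      TendstoInMeasure μ01 (fun n => (z n : ℝ → ℝ)) atTop (x₀ : ℝ → ℝ) ∧
      Metric.diam C / 2 - ε ≤ Metric.infDist x₀ C)
    {ε : ℝ} (hε : 0 < ε) :
    ∃ x : ℕ → Lp ℝ 1 μ01, ∃ x₀ : Lp ℝ 1 μ01, ∃ L : ℝ,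
      (∀ n, x n ∈ C) ∧
      TendstoInMeasure μ01 (fun n => (x n : ℝ → ℝ)) atTop (x₀ : ℝ → ℝ) ∧
      Tendsto (fun n => ‖x n - x₀‖) atTop (𝓝 L) ∧
      Metric.diam C / 2 - ε ≤ L ∧ L ≤ Metric.diam C / 2 + ε ∧
      ∀ c ∈ C, Tendsto (fun n => ‖x n - c‖) atTop (𝓝 (‖x₀ - c‖ + L)) ∧
        Metric.diam C / 2 - ε ≤ ‖x₀ - c‖ := by
  obtain ⟨x₀, z, hzC, hzm, hinf⟩ := hext ε hε
  obtain ⟨ns, hns, hae⟩ := hzm.exists_seq_tendsto_ae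
  set M : ℝ := Metric.diam C + ‖z (ns 0) - x₀‖ with hM
  have hmem : ∀ k, ‖z (ns k) - x₀‖ ∈ Set.Icc (0 : ℝ) M := by
    intro k
    refine ⟨norm_nonneg _, ?_⟩
    have h1 : ‖z (ns k) - x₀‖ ≤ ‖z (ns k) - z (ns 0)‖ + ‖z (ns 0) - x₀‖ :=
      norm_sub_le_norm_sub_add_norm_sub _ _ _
    have h2 : ‖z (ns k) - z (ns 0)‖ ≤ Metric.diam C := by
      rw [← dist_eq_norm]
      exact dist_le_diam_of_mem hbdd (hzC _) (hzC _)
    linarith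
  obtain ⟨L, -, φ, hφ, hLlim⟩ :=
    tendsto_subseq_of_bounded (isBounded_Icc (0:ℝ) M) hmem
  refine ⟨fun k => z (ns (φ k)), x₀, L, fun k => hzC _, ?_, hLlim, ?_, ?_, ?_⟩
  · intro δ hδ
    exact (hzm δ hδ).comp ((hns.comp hφ).tendsto_atTop)
  · refine le_of_tendsto_of_tendsto' tendsto_const_nhds hLlim fun k => ?_
    calc Metric.diam C / 2 - ε ≤ Metric.infDist x₀ C := hinf
      _ ≤ dist x₀ (z (ns (φ k))) := infDist_le_dist_of_mem (hzC _)
      _ = ‖z (ns (φ k)) - x₀‖ := by rw [dist_comm, dist_eq_norm]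
  · have hae' : ∀ᵐ t ∂μ01, Tendsto (fun k => ((z (ns (φ k)) : Lp ℝ 1 μ01) : ℝ → ℝ) t) atTop
        (𝓝 ((x₀ : ℝ → ℝ) t)) := by
      filter_upwards [hae] with t ht
      exact ht.comp hφ.tendsto_atTop
    have hBL := brezisLieb (fun k => z (ns (φ k))) x₀ (z (ns (φ 0))) hae'
    have hlim : Tendsto (fun k => ‖z (ns (φ k)) - z (ns (φ 0))‖) atTop
        (𝓝 (‖x₀ - z (ns (φ 0))‖ + L)) := by
      have := hBL.add hLlim
      simpa using this
    have hle : ‖x₀ - z (ns (φ 0))‖ + L ≤ Metric.diam C := by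
      refine le_of_tendsto_of_tendsto' hlim tendsto_const_nhds fun k => ?_
      rw [← dist_eq_norm]
      exact dist_le_diam_of_mem hbdd (hzC _) (hzC _)
    have hge : Metric.diam C / 2 - ε ≤ ‖x₀ - z (ns (φ 0))‖ := by
      calc Metric.diam C / 2 - ε ≤ Metric.infDist x₀ C := hinf
        _ ≤ dist x₀ (z (ns (φ 0))) := infDist_le_dist_of_mem (hzC _)
        _ = ‖x₀ - z (ns (φ 0))‖ := dist_eq_norm _ _
    linarith
  · intro c hc
    have hae' : ∀ᵐ t ∂μ01, Tendsto (fun k => ((z (ns (φ k)) : Lp ℝ 1 μ01) : ℝ → ℝ) t) atTop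
        (𝓝 ((x₀ : ℝ → ℝ) t)) := by
      filter_upwards [hae] with t ht
      exact ht.comp hφ.tendsto_atTop
    have hBL := brezisLieb (fun k => z (ns (φ k))) x₀ c hae'
    constructor
    · have := hBL.add hLlim
      simpa using this
    · calc Metric.diam C / 2 - ε ≤ Metric.infDist x₀ C := hinf
        _ ≤ dist x₀ c := infDist_le_dist_of_mem hc
        _ = ‖x₀ - c‖ := dist_eq_norm _ _

/-- `2` always works as a coefficient: the estimate with `λ = 2` holds for any
bounded set and any sequence in it. -/
private lemma two_estimate (C : Set (Lp ℝ 1 μ01)) (hbdd : Bornology.IsBounded C)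
    (x : ℕ → Lp ℝ 1 μ01) (x₀ : Lp ℝ 1 μ01) (hx : ∀ n, x n ∈ C) :
    sInf ((fun c => limsup (fun n => ‖c - x n‖) atTop) '' C) ≤
      2 * limsup (fun n => ‖x₀ - x n‖) atTop := by
  set f : ℕ → ℝ := fun n => ‖x₀ - x n‖ with hf
  have hub : ∀ n, f n ≤ ‖x₀ - x 0‖ + Metric.diam C := by
    intro n
    have h1 : f n ≤ ‖x₀ - x 0‖ + ‖x 0 - x n‖ := norm_sub_le_norm_sub_add_norm_sub _ _ _
    have h2 : ‖x 0 - x n‖ ≤ Metric.diam C := by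
      rw [← dist_eq_norm]; exact dist_le_diam_of_mem hbdd (hx 0) (hx n)
    linarith
  have hB : IsBoundedUnder (· ≤ ·) atTop f :=
    isBoundedUnder_of ⟨_, hub⟩
  have hBl : IsBoundedUnder (· ≥ ·) atTop f :=
    isBoundedUnder_of ⟨0, fun n => norm_nonneg _⟩
  set L : ℝ := limsup f atTop with hL
  have hBc : ∀ c ∈ C, IsBoundedUnder (· ≤ ·) atTop (fun n => ‖c - x n‖) := by
    intro c hc
    refine isBoundedUnder_of ⟨Metric.diam C, fun n => ?_⟩
    rw [← dist_eq_norm]; exact dist_le_diam_of_mem hbdd hc (hx n)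
  have hbb : BddBelow ((fun c => limsup (fun n => ‖c - x n‖) atTop) '' C) := by
    refine ⟨0, ?_⟩
    rintro b ⟨c, hc, rfl⟩
    exact le_limsup_of_frequently_le (Frequently.of_forall fun n => norm_nonneg _) (hBc c hc)
  by_contra hcon
  push_neg at hcon
  set δ : ℝ := (sInf ((fun c => limsup (fun n => ‖c - x n‖) atTop) '' C) - 2 * L) / 2 with hδ
  have hδpos : 0 < δ := by simp only [hδ]; linarith
  have hliminf : liminf f atTop < L + δ / 2 :=
    lt_of_le_of_lt (liminf_le_limsup hB hBl) (by linarith)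
  obtain ⟨m, hm⟩ := (frequently_lt_of_liminf_lt hB.isCoboundedUnder_ge hliminf).exists
  have hev : ∀ᶠ n in atTop, f n < L + δ / 2 :=
    eventually_lt_of_limsup_lt (by linarith) hB
  have hlsle : limsup (fun n => ‖x m - x n‖) atTop ≤ 2 * L + δ := by
    refine limsup_le_of_le ((isBoundedUnder_of ⟨0, fun n => norm_nonneg _⟩ :
      IsBoundedUnder (· ≥ ·) atTop fun n => ‖x m - x n‖).isCoboundedUnder_le) ?_
    filter_upwards [hev] with n hn
    have h1 : ‖x m - x n‖ ≤ ‖x m - x₀‖ + ‖x₀ - x n‖ := norm_sub_le_norm_sub_add_norm_sub _ _ _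
    have h2 : ‖x m - x₀‖ = f m := norm_sub_rev _ _
    have : f n < L + δ / 2 := hn
    simp only [h2] at h1
    linarith
  have hle : sInf ((fun c => limsup (fun n => ‖c - x n‖) atTop) '' C) ≤
      limsup (fun n => ‖x m - x n‖) atTop :=
    csInf_le hbb ⟨x m, hx m, rfl⟩
  have : sInf ((fun c => limsup (fun n => ‖c - x n‖) atTop) '' C) = 2 * L + 2 * δ := by
    simp only [hδ]; ring_nf
  linarith

/-- If the Hausdorff distance between `C` and its closure in measure attains the extremal
value `diam C / 2`, then there are sequences witnessing almost-diametral behaviour and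
consequently `t(C) = 2`. -/
theorem tCoef_eq_two_of_extremal_hausdorffDist
    (C : Set (Lp ℝ 1 μ01)) (hclosed : IsClosed C) (hconv : Convex ℝ C)
    (hbdd : Bornology.IsBounded C) (hdiam : 0 < Metric.diam C)
    (hext : ∀ ε > (0 : ℝ), ∃ x₀ : Lp ℝ 1 μ01, ∃ z : ℕ → Lp ℝ 1 μ01,
      (∀ n, z n ∈ C) ∧
      TendstoInMeasure μ01 (fun n => (z n : ℝ → ℝ)) atTop (x₀ : ℝ → ℝ) ∧
      Metric.diam C / 2 - ε ≤ Metric.infDist x₀ C) :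
    (∀ ε > (0 : ℝ), ∃ x : ℕ → Lp ℝ 1 μ01, ∃ x₀ : Lp ℝ 1 μ01,
      (∀ n, x n ∈ C) ∧
      TendstoInMeasure μ01 (fun n => (x n : ℝ → ℝ)) atTop (x₀ : ℝ → ℝ) ∧
      Metric.diam C / 2 - ε ≤ limsup (fun n => ‖x n - x₀‖) atTop ∧
      ∀ c ∈ C, 2 * limsup (fun n => ‖x n - x₀‖) atTop - ε ≤
        limsup (fun n => ‖x n - c‖) atTop) ∧
    tCoef C = 2 := by
  have hne : C.Nonempty := by
    rcases C.eq_empty_or_nonempty with h | h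
    · rw [h, Metric.diam_empty] at hdiam
      exact absurd hdiam (lt_irrefl 0)
    · exact h
  have hpart1 : ∀ ε > (0 : ℝ), ∃ x : ℕ → Lp ℝ 1 μ01, ∃ x₀ : Lp ℝ 1 μ01,
      (∀ n, x n ∈ C) ∧
      TendstoInMeasure μ01 (fun n => (x n : ℝ → ℝ)) atTop (x₀ : ℝ → ℝ) ∧
      Metric.diam C / 2 - ε ≤ limsup (fun n => ‖x n - x₀‖) atTop ∧
      ∀ c ∈ C, 2 * limsup (fun n => ‖x n - x₀‖) atTop - ε ≤
        limsup (fun n => ‖x n - c‖) atTop := by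
    intro ε hε
    obtain ⟨x, x₀, L, hxC, hxm, hLt, hL1, hL2, hc⟩ :=
      key_extraction C hbdd hext (show (0:ℝ) < ε / 4 by linarith)
    have hlimsup : limsup (fun n => ‖x n - x₀‖) atTop = L := hLt.limsup_eq
    refine ⟨x, x₀, hxC, hxm, ?_, ?_⟩
    · rw [hlimsup]; linarith
    · intro c hc'
      obtain ⟨ht, hd⟩ := hc c hc'
      rw [hlimsup, ht.limsup_eq]
      linarith
  refine ⟨hpart1, ?_⟩
  unfold tCoef
  have h2mem : (2:ℝ) ∈ {l : ℝ | 0 ≤ l ∧ ∀ (x : ℕ → Lp ℝ 1 μ01) (x₀ : Lp ℝ 1 μ01),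
      (∀ n, x n ∈ C) →
      TendstoInMeasure μ01 (fun n => (x n : ℝ → ℝ)) atTop (x₀ : ℝ → ℝ) →
      sInf ((fun c => limsup (fun n => ‖c - x n‖) atTop) '' C) ≤
        l * limsup (fun n => ‖x₀ - x n‖) atTop} :=
    ⟨by norm_num, fun x x₀ hx _ => two_estimate C hbdd x x₀ hx⟩
  apply le_antisymm
  · exact csInf_le ⟨0, fun l hl => hl.1⟩ h2mem
  · refine le_csInf ⟨2, h2mem⟩ ?_
    rintro l ⟨hl0, hl⟩
    by_contra hlt
    push_neg at hlt
    have h2l : 0 < 2 - l := by linarith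
    set ε : ℝ := min (Metric.diam C / 4) ((2 - l) * Metric.diam C / 8) with hεdef
    have hεpos : 0 < ε := lt_min (by linarith) (by positivity)
    obtain ⟨x, x₀, hxC, hxm, hL1, hc⟩ := hpart1 ε hεpos
    set L : ℝ := limsup (fun n => ‖x n - x₀‖) atTop with hLdef
    have h1 := hl x x₀ hxC hxm
    have heq1 : (fun n => ‖x₀ - x n‖) = fun n => ‖x n - x₀‖ :=
      funext fun n => norm_sub_rev _ _
    rw [heq1, ← hLdef] at h1
    have h2 : 2 * L - ε ≤ sInf ((fun c => limsup (fun n => ‖c - x n‖) atTop) '' C) := by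
      refine le_csInf (hne.image _) ?_
      rintro b ⟨c, hcC, rfl⟩
      have heq2 : (fun n => ‖c - x n‖) = fun n => ‖x n - c‖ :=
        funext fun n => norm_sub_rev _ _
      show 2 * L - ε ≤ limsup (fun n => ‖c - x n‖) atTop
      rw [heq2]
      exact hc c hcC
    have hε1 : ε ≤ Metric.diam C / 4 := min_le_left _ _
    have hLge : Metric.diam C / 4 ≤ L := by linarith
    have hε2 : ε ≤ (2 - l) * Metric.diam C / 8 := min_le_right _ _
    have hA : (2 - l) * (Metric.diam C / 4) ≤ (2 - l) * L :=
      mul_le_mul_of_nonneg_left hLge (by linarith)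
    have hB : 2 * L - ε ≤ l * L := h2.trans h1
    nlinarith
end

section
/- Let μ be a finite measure, let (f_n) be a sequence in L¹(μ) converging to 0 μ-almost everywhere, and let g ∈ L¹(μ). Then lim_n ( ‖f_n + g‖₁ − ‖f_n‖₁ ) = ‖g‖₁. In particular, limsup_n ‖f_n + g‖₁ = limsup_n ‖f_n‖₁ + ‖g‖₁ whenever (f_n) is bounded in L¹(μ). -/
open MeasureTheory Filter Topology

/-- If `μ` is a finite measure, `(f n) ⊆ L¹(μ)` converges to `0` almost everywhere and
`g ∈ L¹(μ)`, then `‖f n + g‖₁ - ‖f n‖₁ → ‖g‖₁`; in particular, if `(f n)` is bounded then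
`limsup ‖f n + g‖₁ = limsup ‖f n‖₁ + ‖g‖₁`. -/
theorem tendsto_norm_add_sub_norm_of_ae_tendsto_zero
    {Ω : Type*} [MeasurableSpace Ω] (μ : Measure Ω) [IsFiniteMeasure μ]
    (f : ℕ → Lp ℝ 1 μ) (g : Lp ℝ 1 μ)
    (hae : ∀ᵐ ω ∂μ, Tendsto (fun n => (f n : Ω → ℝ) ω) atTop (𝓝 0)) :
    Tendsto (fun n => ‖f n + g‖ - ‖f n‖) atTop (𝓝 ‖g‖) ∧
    ((∃ M : ℝ, ∀ n, ‖f n‖ ≤ M) →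
      limsup (fun n => ‖f n + g‖) atTop = limsup (fun n => ‖f n‖) atTop + ‖g‖) := by
  have hfi : ∀ n, Integrable (f n) μ := fun n => L1.integrable_coeFn (f n)
  have hgi : Integrable (g : Ω → ℝ) μ := L1.integrable_coeFn g
  -- dominated convergence for h n ω = |f n ω + g ω| - |f n ω| - |g ω|
  have hdct : Tendsto (fun n => ∫ ω, (|(f n : Ω → ℝ) ω + (g : Ω → ℝ) ω| - |(f n : Ω → ℝ) ω|
      - |(g : Ω → ℝ) ω|) ∂μ) atTop (𝓝 (∫ _ω, (0 : ℝ) ∂μ)) := by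
    apply tendsto_integral_of_dominated_convergence (fun ω => 2 * |(g : Ω → ℝ) ω|)
    · intro n
      exact ((((hfi n).add hgi).abs.sub (hfi n).abs).sub hgi.abs).aestronglyMeasurable
    · simpa using hgi.abs.const_mul 2
    · intro n
      filter_upwards with ω
      have h1 : |(|(f n : Ω → ℝ) ω + (g : Ω → ℝ) ω| - |(f n : Ω → ℝ) ω|)| ≤ |(g : Ω → ℝ) ω| := by
        have := abs_abs_sub_abs_le_abs_sub ((f n : Ω → ℝ) ω + (g : Ω → ℝ) ω) ((f n : Ω → ℝ) ω)
        simpa using this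
      calc |(|(f n : Ω → ℝ) ω + (g : Ω → ℝ) ω| - |(f n : Ω → ℝ) ω| - |(g : Ω → ℝ) ω|)|
          ≤ |(|(f n : Ω → ℝ) ω + (g : Ω → ℝ) ω| - |(f n : Ω → ℝ) ω|)| + |(|(g : Ω → ℝ) ω|)| :=
            abs_sub _ _
        _ ≤ |(g : Ω → ℝ) ω| + |(g : Ω → ℝ) ω| := by
            rw [abs_abs]; exact add_le_add_left h1 _
        _ = 2 * |(g : Ω → ℝ) ω| := by ring
    · filter_upwards [hae] with ω hω
      have h1 : Tendsto (fun n => |(f n : Ω → ℝ) ω + (g : Ω → ℝ) ω|) atTop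
          (𝓝 |(g : Ω → ℝ) ω|) := by
        have := (hω.add_const ((g : Ω → ℝ) ω)).abs
        simpa using this
      have h2 : Tendsto (fun n => |(f n : Ω → ℝ) ω|) atTop (𝓝 0) := by
        simpa using hω.abs
      have := (h1.sub h2).sub (tendsto_const_nhds (x := |(g : Ω → ℝ) ω|))
      simpa using this
  have hnorm : ∀ n, ‖f n + g‖ - ‖f n‖ - ‖g‖
      = ∫ ω, (|(f n : Ω → ℝ) ω + (g : Ω → ℝ) ω| - |(f n : Ω → ℝ) ω| - |(g : Ω → ℝ) ω|) ∂μ := by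
    intro n
    have e1 : ‖f n + g‖ = ∫ ω, |(f n : Ω → ℝ) ω + (g : Ω → ℝ) ω| ∂μ := by
      rw [L1.norm_eq_integral_norm]
      refine integral_congr_ae ?_
      filter_upwards [Lp.coeFn_add (f n) g] with ω hω
      rw [Real.norm_eq_abs, hω, Pi.add_apply]
    have e2 : ‖f n‖ = ∫ ω, |(f n : Ω → ℝ) ω| ∂μ := by
      rw [L1.norm_eq_integral_norm]; simp [Real.norm_eq_abs]
    have e3 : ‖g‖ = ∫ ω, |(g : Ω → ℝ) ω| ∂μ := by
      rw [L1.norm_eq_integral_norm]; simp [Real.norm_eq_abs]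
    have i1 : Integrable (fun ω => |(f n : Ω → ℝ) ω + (g : Ω → ℝ) ω|) μ := ((hfi n).add hgi).abs
    have i2 : Integrable (fun ω => |(f n : Ω → ℝ) ω|) μ := (hfi n).abs
    have i3 : Integrable (fun ω => |(g : Ω → ℝ) ω|) μ := hgi.abs
    have i12 : Integrable (fun ω => |(f n : Ω → ℝ) ω + (g : Ω → ℝ) ω| - |(f n : Ω → ℝ) ω|) μ :=
      i1.sub i2
    rw [e1, e2, e3, ← integral_sub i1 i2, ← integral_sub i12 i3]
  have hmain : Tendsto (fun n => ‖f n + g‖ - ‖f n‖) atTop (𝓝 ‖g‖) := by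
    have : Tendsto (fun n => ‖f n + g‖ - ‖f n‖ - ‖g‖) atTop (𝓝 0) := by
      simp only [hnorm]
      simpa using hdct
    have := this.add_const ‖g‖
    simpa using this
  refine ⟨hmain, fun ⟨M, hM⟩ => ?_⟩
  -- limsup part
  have hb_le : IsBoundedUnder (· ≤ ·) atTop (fun n => ‖f n‖) := isBoundedUnder_of ⟨M, hM⟩
  have hb_ge : IsBoundedUnder (· ≥ ·) atTop (fun n => ‖f n‖) :=
    isBoundedUnder_of ⟨0, fun n => norm_nonneg _⟩
  have ht_le : IsBoundedUnder (· ≤ ·) atTop (fun n => ‖f n + g‖ - ‖f n‖) :=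
    hmain.isBoundedUnder_le
  have ht_ge : IsBoundedUnder (· ≥ ·) atTop (fun n => ‖f n + g‖ - ‖f n‖) :=
    hmain.isBoundedUnder_ge
  have key : (fun n => ‖f n + g‖) = (fun n => ‖f n‖) + (fun n => ‖f n + g‖ - ‖f n‖) := by
    funext n; simp
  have hlimsup_t : limsup (fun n => ‖f n + g‖ - ‖f n‖) atTop = ‖g‖ := hmain.limsup_eq
  have hliminf_t : liminf (fun n => ‖f n + g‖ - ‖f n‖) atTop = ‖g‖ := hmain.liminf_eq
  apply le_antisymm
  · calc limsup (fun n => ‖f n + g‖) atTop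
        ≤ limsup (fun n => ‖f n‖) atTop + limsup (fun n => ‖f n + g‖ - ‖f n‖) atTop := by
          rw [key]
          exact limsup_add_le hb_ge hb_le ht_ge.isCoboundedUnder_le ht_le
      _ = limsup (fun n => ‖f n‖) atTop + ‖g‖ := by rw [hlimsup_t]
  · calc limsup (fun n => ‖f n‖) atTop + ‖g‖
        = limsup (fun n => ‖f n‖) atTop + liminf (fun n => ‖f n + g‖ - ‖f n‖) atTop := by
          rw [hliminf_t]
      _ ≤ limsup (fun n => ‖f n + g‖) atTop := by
          rw [key]
          exact le_limsup_add hb_le hb_ge.isCoboundedUnder_le ht_le ht_ge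
end

section
/- Let μ be a finite measure. L¹(μ) satisfies the uniform Opial condition with respect to μ-almost everywhere convergence, with Opial modulus r(c) = c: if (f_n) is a bounded sequence in L¹(μ) converging to 0 μ-almost everywhere with liminf_n ‖f_n‖₁ ≥ 1, and x ∈ L¹(μ) satisfies ‖x‖₁ ≥ c for some c ≥ 0, then liminf_n ‖f_n − x‖₁ ≥ 1 + c. -/
open MeasureTheory Filter Topology

/-- For a finite measure `μ`, `L¹(μ)` satisfies the uniform Opial condition with respect to
almost everywhere convergence, with Opial modulus `r(c) = c`. -/
theorem uniform_opial_L1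
    {Ω : Type*} [MeasurableSpace Ω] (μ : Measure Ω) [IsFiniteMeasure μ]
    (f : ℕ → Lp ℝ 1 μ) (hbdd : ∃ M : ℝ, ∀ n, ‖f n‖ ≤ M)
    (hae : ∀ᵐ ω ∂μ, Tendsto (fun n => (f n : Ω → ℝ) ω) atTop (𝓝 0))
    (hnorm : 1 ≤ liminf (fun n => ‖f n‖) atTop)
    (c : ℝ) (hc : 0 ≤ c) (x : Lp ℝ 1 μ) (hx : c ≤ ‖x‖) :
    1 + c ≤ liminf (fun n => ‖f n - x‖) atTop := by
  obtain ⟨M, hM⟩ := hbdd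
  -- integrability facts
  have hfi : ∀ n, Integrable (f n : Ω → ℝ) μ := fun n => L1.integrable_coeFn (f n)
  have hxi : Integrable (x : Ω → ℝ) μ := L1.integrable_coeFn x
  set g : ℕ → Ω → ℝ := fun n ω => |(f n : Ω → ℝ) ω - (x : Ω → ℝ) ω| - |(f n : Ω → ℝ) ω| with hg
  have hgi : ∀ n, Integrable (g n) μ := fun n =>
    (((hfi n).sub hxi).abs).sub ((hfi n).abs)
  -- DCT: ∫ g n → ∫ |x|
  have hDCT : Tendsto (fun n => ∫ ω, g n ω ∂μ) atTop (𝓝 (∫ ω, |(x : Ω → ℝ) ω| ∂μ)) := by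
    refine tendsto_integral_of_dominated_convergence (fun ω => |(x : Ω → ℝ) ω|) ?_ hxi.abs ?_ ?_
    · exact fun n => (hgi n).aestronglyMeasurable
    · intro n
      filter_upwards with ω
      rw [Real.norm_eq_abs]
      have := abs_abs_sub_abs_le_abs_sub ((f n : Ω → ℝ) ω - (x : Ω → ℝ) ω) ((f n : Ω → ℝ) ω)
      simpa [hg] using this
    · filter_upwards [hae] with ω hω
      have h1 : Tendsto (fun n => (f n : Ω → ℝ) ω - (x : Ω → ℝ) ω) atTop
          (𝓝 (0 - (x : Ω → ℝ) ω)) := hω.sub tendsto_const_nhds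
      have := ((h1.abs).sub (hω.abs))
      simpa using this
  have hIx : ∫ ω, |(x : Ω → ℝ) ω| ∂μ = ‖x‖ := by
    rw [L1.norm_eq_integral_norm]; simp [Real.norm_eq_abs]
  -- key equality: ‖f n - x‖ = ‖f n‖ + ∫ g n
  have hkey : ∀ n, ‖f n - x‖ = ‖f n‖ + ∫ ω, g n ω ∂μ := by
    intro n
    have h1 : ‖f n - x‖ = ∫ ω, |(f n : Ω → ℝ) ω - (x : Ω → ℝ) ω| ∂μ := by
      rw [L1.norm_eq_integral_norm]
      refine integral_congr_ae ?_
      filter_upwards [Lp.coeFn_sub (f n) x] with ω hω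
      rw [hω]; simp [Real.norm_eq_abs]
    have h2 : ‖f n‖ = ∫ ω, |(f n : Ω → ℝ) ω| ∂μ := by
      rw [L1.norm_eq_integral_norm]; simp [Real.norm_eq_abs]
    rw [h1, h2, ← integral_add (hfi n).abs (hgi n)]
    congr 1; funext ω; simp [hg]
  have hlim : liminf (fun n => ‖f n - x‖) atTop =
      liminf ((fun n => ‖f n‖) + fun n => ∫ ω, g n ω ∂μ) atTop := by
    congr 1; funext n; simp [hkey n]
  rw [hlim]
  have hsum := le_liminf_add (f := atTop) (u := fun n => ‖f n‖)
    (v := fun n => ∫ ω, g n ω ∂μ)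
    (isBoundedUnder_of ⟨0, fun n => norm_nonneg _⟩)
    (isBoundedUnder_of ⟨M, fun n => hM n⟩)
    (hDCT.isBoundedUnder_ge) (hDCT.isBoundedUnder_le.isCoboundedUnder_ge)
  refine le_trans ?_ hsum
  rw [hDCT.liminf_eq, hIx]
  exact add_le_add hnorm hx
end

section
/- Let X be a normed space, let C ⊆ X be a convex set, let T : C → C be an affine map, and let (x_n) ⊆ C be an approximate fixed point sequence for T. Then the sequence of arithmetic means z_p := (x₁ + x₂ + ⋯ + x_p)/p is also an approximate fixed point sequence for T, i.e., lim_p ‖z_p − T z_p‖ = 0. -/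
open Filter Topology

/-- If `T` is an affine self-map of a convex set `C` and `(x n)` is an approximate fixed point
sequence for `T`, then the arithmetic means `z_p = (x₁ + ⋯ + x_p)/p` also form an approximate
fixed point sequence. -/
theorem means_of_afps_is_afps_of_affine {X : Type*} [NormedAddCommGroup X] [NormedSpace ℝ X]
    (C : Set X) (hconv : Convex ℝ C)
    (T : X → X) (hmaps : Set.MapsTo T C C)
    (haff : ∀ x ∈ C, ∀ y ∈ C, ∀ l : ℝ, 0 ≤ l → l ≤ 1 →
      T (l • x + (1 - l) • y) = l • T x + (1 - l) • T y)
    (x : ℕ → X) (hxC : ∀ n, x n ∈ C)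
    (hafps : Tendsto (fun n => ‖x n - T (x n)‖) atTop (𝓝 0)) :
    Tendsto (fun p : ℕ => ‖((p : ℝ)⁻¹ • ∑ i ∈ Finset.Icc 1 p, x i) -
      T ((p : ℝ)⁻¹ • ∑ i ∈ Finset.Icc 1 p, x i)‖) atTop (𝓝 0) := by
  set z : ℕ → X := fun p => (p : ℝ)⁻¹ • ∑ i ∈ Finset.Icc 1 p, x i with hz
  -- key claim by induction
  have key : ∀ p : ℕ, 1 ≤ p → z p ∈ C ∧
      T (z p) = (p : ℝ)⁻¹ • ∑ i ∈ Finset.Icc 1 p, T (x i) := by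
    intro p hp
    induction p with
    | zero => omega
    | succ n ih =>
      rcases Nat.eq_or_lt_of_le hp with h1 | h1
      · have : z 1 = x 1 := by simp [hz]
        rw [← h1]
        constructor
        · rw [show z 1 = x 1 from this]; exact hxC 1
        · simp [this]
      · have hn : 1 ≤ n := by omega
        obtain ⟨hzC, hzT⟩ := ih hn
        have hnpos : (0 : ℝ) < n := by exact_mod_cast hn
        have hn1pos : (0 : ℝ) < (n : ℝ) + 1 := by positivity
        set l : ℝ := ((n : ℝ) + 1)⁻¹ with hl
        have hl0 : 0 ≤ l := by positivity
        have hl1 : l ≤ 1 := by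
          rw [hl]
          rw [inv_le_one_iff₀]; right; linarith
        have h1l : 1 - l = (n : ℝ) * ((n : ℝ) + 1)⁻¹ := by
          rw [hl]; field_simp; ring
        have hdecomp : z (n + 1) = l • x (n + 1) + (1 - l) • z n := by
          rw [hz]
          simp only
          rw [Finset.sum_Icc_succ_top (by omega)]
          rw [h1l, hl]
          push_cast
          rw [smul_add]
          match_scalars <;> field_simp <;> ring
        have hmem : z (n + 1) ∈ C :=
          hdecomp ▸ hconv (hxC (n + 1)) hzC hl0 (by linarith) (by ring)
        refine ⟨hmem, ?_⟩
        rw [hdecomp, haff _ (hxC (n + 1)) _ hzC l hl0 hl1, hzT]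
        rw [Finset.sum_Icc_succ_top (show 1 ≤ n + 1 by omega)]
        rw [h1l, hl]
        push_cast
        rw [smul_add]
        match_scalars <;> field_simp <;> ring
  -- Cesàro
  have hcesaro : Tendsto (fun p : ℕ => (p : ℝ)⁻¹ *
      ∑ i ∈ Finset.range p, ‖x (i + 1) - T (x (i + 1))‖) atTop (𝓝 0) := by
    have := (hafps.comp (tendsto_add_atTop_nat 1)).cesaro
    simpa using this
  apply squeeze_zero' (Eventually.of_forall fun p => norm_nonneg _)
  · filter_upwards [eventually_ge_atTop 1] with p hp
    obtain ⟨hzC, hzT⟩ := key p hp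
    have : z p - T (z p) = (p : ℝ)⁻¹ • ∑ i ∈ Finset.Icc 1 p, (x i - T (x i)) := by
      rw [hzT, Finset.sum_sub_distrib, smul_sub]
    calc ‖z p - T (z p)‖ = ‖(p : ℝ)⁻¹ • ∑ i ∈ Finset.Icc 1 p, (x i - T (x i))‖ := by rw [this]
      _ ≤ (p : ℝ)⁻¹ * ∑ i ∈ Finset.Icc 1 p, ‖x i - T (x i)‖ := by
          rw [norm_smul, Real.norm_eq_abs, abs_inv, Nat.abs_cast]
          gcongr
          exact norm_sum_le _ _
      _ = (p : ℝ)⁻¹ * ∑ i ∈ Finset.range p, ‖x (i + 1) - T (x (i + 1))‖ := by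
          congr 1
          rw [← Finset.Ico_add_one_right_eq_Icc, Finset.sum_Ico_eq_sum_range]
          simp [add_comm]
  · exact hcesaro
end
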